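/- Let X be a compact Hausdorff space equipped with an expansive continuous action of a group G, and let U₀ be a closed expansiveness entourage for (X,G). Then for every entourage U of X there exists a finite subset E ⊂ G such that ⋂_{g∈E} g⁻¹U₀ ⊂ U, where g⁻¹U₀ := {(x,y) ∈ X × X : (g·x, g·y) ∈ U₀}. -/

import Mathlib

open scoped Uniformity

/-- If `U₀` is a closed expansiveness entourage for an expansive continuous action of a
group `G` on a compact Hausdorff space `X`, then the entourages `⋂_{g ∈ E} g⁻¹U₀`, for
`E ⊆ G` finite, form a base of entourages of `X`. -/
theorem expansive_base_entourages {G X : Type*} [Group G]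
    [UniformSpace X] [CompactSpace X] [T2Space X] [MulAction G X]
    (hcont : ∀ g : G, Continuous fun x : X => g • x)
    (U₀ : Set (X × X)) (hU₀ : U₀ ∈ 𝓤 X) (hU₀closed : IsClosed U₀)
    (hexp : ∀ x y : X, x ≠ y → ∃ g : G, (g • x, g • y) ∉ U₀)
    (U : Set (X × X)) (hU : U ∈ 𝓤 X) :
    ∃ E : Finset G, (⋂ g ∈ E, {p : X × X | (g • p.1, g • p.2) ∈ U₀}) ⊆ U := by
  -- The closed sets g⁻¹U₀
  set F : G → Set (X × X) := fun g => {p : X × X | (g • p.1, g • p.2) ∈ U₀} with hF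
  have hFclosed : ∀ g, IsClosed (F g) := fun g =>
    hU₀closed.preimage (((hcont g).comp continuous_fst).prodMk
      ((hcont g).comp continuous_snd))
  -- the complement of the interior of U is compact
  have hKcompact : IsCompact (interior U)ᶜ :=
    (isOpen_interior.isClosed_compl).isCompact
  -- diagonal ⊆ interior U, so (interior U)ᶜ ∩ ⋂ F g = ∅
  have hempty : (interior U)ᶜ ∩ ⋂ g, F g = ∅ := by
    ext p
    simp only [Set.mem_inter_iff, Set.mem_iInter, Set.mem_compl_iff, Set.mem_empty_iff_false,
      iff_false, not_and]
    intro hp hall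
    by_cases hxy : p.1 = p.2
    · apply hp
      have : U ∈ nhds (p.1, p.1) := nhds_le_uniformity p.1 hU
      rw [mem_interior_iff_mem_nhds]
      have : (p.1, p.2) = (p.1, p.1) := by rw [hxy]
      rw [show p = (p.1, p.2) from rfl, this]
      exact nhds_le_uniformity p.1 hU
    · obtain ⟨g, hg⟩ := hexp p.1 p.2 hxy
      exact hg (hall g)
  obtain ⟨E, hE⟩ := hKcompact.elim_finite_subfamily_closed F hFclosed (by
    rw [hempty])
  refine ⟨E, fun p hp => ?_⟩
  have : p ∈ interior U := by
    by_contra h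
    exact Set.eq_empty_iff_forall_notMem.mp hE p ⟨h, by
      simpa [hF] using hp⟩
  exact interior_subset this
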